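/- arXiv:1409.1323 — 3 statements merged into one kernel-verified Lean document; each statement's English description precedes it below -/
import Mathlib

section
/- For any injective function φ from a finite set S into binary strings {0,1}*, and any probability mass function p on S, the expected codeword length satisfies Σ_{z∈S} p(z)·len(φ(z)) ≥ Σ_{z∈S} p(z)·log₂(1/p(z)) − log₂(log₂(|S|+1)+1) − 1. -/
open Finset Real

namespace Stmt1Aux

def enc (l : List Bool) : ℕ := l.foldl (fun n b => 2 * n + cond b 1 0) 1

lemma enc_nil : enc [] = 1 := rfl

lemma enc_append (l : List Bool) (b : Bool) :
    enc (l ++ [b]) = 2 * enc l + cond b 1 0 := by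
  simp [enc, List.foldl_append]

lemma enc_pos (l : List Bool) : 1 ≤ enc l := by
  induction l using List.reverseRecOn with
  | nil => simp [enc_nil]
  | append_singleton xs x ih => rw [enc_append]; cases x <;> simp <;> omega

lemma enc_lt (l : List Bool) : enc l < 2 ^ (l.length + 1) := by
  induction l using List.reverseRecOn with
  | nil => simp [enc_nil]
  | append_singleton xs x ih =>
    rw [enc_append]
    simp only [List.length_append, List.length_singleton]
    have hx : cond x 1 0 ≤ 1 := by cases x <;> simp
    have h2 : 2 ^ (xs.length + 1 + 1) = 2 * 2 ^ (xs.length + 1) := by ring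
    omega

lemma enc_inj : Function.Injective enc := by
  intro a
  induction a using List.reverseRecOn with
  | nil =>
    intro b h
    induction b using List.reverseRecOn with
    | nil => rfl
    | append_singleton ys y _ =>
      rw [enc_nil, enc_append] at h
      have := enc_pos ys
      cases y <;> simp at h <;> omega
  | append_singleton xs x ih =>
    intro b h
    induction b using List.reverseRecOn with
    | nil =>
      rw [enc_append, enc_nil] at h
      have := enc_pos xs
      cases x <;> simp at h <;> omega
    | append_singleton ys y _ =>
      rw [enc_append, enc_append] at h
      cases x <;> cases y <;> simp only [cond] at h
      · simp [ih (show enc xs = enc ys by omega)]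
      · omega
      · omega
      · simp [ih (show enc xs = enc ys by omega)]

lemma sum_inv_le (n : ℕ) (T : Finset ℕ) (hT : ∀ k ∈ T, 1 ≤ k) (hcard : T.card = n) :
    ∑ k ∈ T, (k : ℝ)⁻¹ ≤ ∑ k ∈ Finset.Icc 1 n, (k : ℝ)⁻¹ := by
  induction n generalizing T with
  | zero => simp [Finset.card_eq_zero.mp hcard]
  | succ n ih =>
    have hne : T.Nonempty := Finset.card_pos.mp (by omega)
    have hm : T.max' hne ∈ T := T.max'_mem hne
    set m := T.max' hne with hmdef
    have hsub : T ⊆ Finset.Icc 1 m := fun k hk => Finset.mem_Icc.mpr ⟨hT k hk, T.le_max' k hk⟩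
    have hmn : n + 1 ≤ m := by
      have h := Finset.card_le_card hsub
      rw [Nat.card_Icc, hcard] at h
      omega
    have herase : (T.erase m).card = n := by rw [Finset.card_erase_of_mem hm, hcard]; omega
    rw [← Finset.sum_erase_add T _ hm, Finset.sum_Icc_succ_top (by omega : 1 ≤ n + 1)]
    refine add_le_add (ih _ (fun k hk => hT k (Finset.mem_of_mem_erase hk)) herase) ?_
    have h1 : (0:ℝ) < ((n:ℝ) + 1) := by positivity
    have h2 : ((n:ℝ) + 1) ≤ (m:ℝ) := by exact_mod_cast hmn
    push_cast
    exact inv_anti₀ h1 h2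

end Stmt1Aux

open Stmt1Aux in
/-- One-to-one codes beat the entropy by at most an additive log-log term:
for any injective binary encoding of a finite set,
`E[len] ≥ H(p) − log₂(log₂(|S|+1)+1) − 1`. -/
theorem stmt1 {S : Type*} [Fintype S] [Nonempty S]
    (p : S → ℝ) (hp : ∀ z, 0 ≤ p z) (hsum : ∑ z, p z = 1)
    (φ : S → List Bool) (hφ : Function.Injective φ) :
    ∑ z, p z * ((φ z).length : ℝ) ≥
      ∑ z, p z * Real.logb 2 (1 / p z)
        - Real.logb 2 (Real.logb 2 ((Fintype.card S : ℝ) + 1) + 1) - 1 := by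
  classical
  have hlog2 : (0:ℝ) < Real.log 2 := Real.log_pos one_lt_two
  set n := Fintype.card S with hn
  set t : Finset S := Finset.univ.filter (fun z => p z ≠ 0) with ht
  have hpt : ∀ z ∈ t, 0 < p z := by
    intro z hz
    rcases Finset.mem_filter.mp hz with ⟨-, h⟩
    exact lt_of_le_of_ne (hp z) (Ne.symm h)
  have hsumt : ∑ z ∈ t, p z = 1 := by rw [← hsum]; exact Finset.sum_filter_ne_zero _
  have htne : t.Nonempty := by
    by_contra h
    rw [Finset.not_nonempty_iff_eq_empty] at h
    rw [h] at hsumt; simp at hsumt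
  set g : S → ℕ := fun z => enc (φ z) with hg
  have hginj : Function.Injective g := fun a b h => hφ (enc_inj h)
  have hg1 : ∀ z, (1:ℝ) ≤ (g z : ℝ) := fun z => by exact_mod_cast enc_pos (φ z)
  have hg0 : ∀ z, (0:ℝ) < (g z : ℝ) := fun z => lt_of_lt_of_le zero_lt_one (hg1 z)
  -- length lower bound
  have hlen : ∀ z, Real.logb 2 (g z) - 1 ≤ ((φ z).length : ℝ) := by
    intro z
    have h1 : (g z : ℝ) ≤ 2 ^ ((φ z).length + 1) := by
      exact_mod_cast (enc_lt (φ z)).le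
    have h2 : Real.logb 2 ((g z : ℝ)) ≤ Real.logb 2 ((2:ℝ) ^ ((φ z).length + 1)) :=
      Real.logb_le_logb_of_le one_lt_two (hg0 z) h1
    rw [Real.logb_pow, Real.logb_self_eq_one one_lt_two, mul_one] at h2
    push_cast at h2
    linarith
  -- Jensen
  set x : S → ℝ := fun z => ((g z : ℝ) * p z)⁻¹ with hx
  have hjensen := (strictConcaveOn_log_Ioi.concaveOn).le_map_sum (w := p) (p := x) (t := t)
    (fun z hz => (hpt z hz).le) hsumt
    (fun z hz => Set.mem_Ioi.mpr (by have h1 := hpt z hz; have h2 := hg0 z; positivity))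
  have hsx : ∑ z ∈ t, p z • x z = ∑ z ∈ t, ((g z : ℝ))⁻¹ := by
    refine Finset.sum_congr rfl fun z hz => ?_
    have hpz := (hpt z hz).ne'
    simp only [hx, smul_eq_mul, mul_inv]
    field_simp
  -- sum of inverses bound
  have hC : ∑ z ∈ t, ((g z : ℝ))⁻¹ ≤ Real.logb 2 ((n:ℝ) + 1) + 1 := by
    have hn1 : 1 ≤ n := Fintype.card_pos
    calc ∑ z ∈ t, ((g z : ℝ))⁻¹
        ≤ ∑ z : S, ((g z : ℝ))⁻¹ :=
          Finset.sum_le_sum_of_subset_of_nonneg (Finset.subset_univ t)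
            (fun z _ _ => by positivity)
      _ = ∑ k ∈ Finset.univ.image g, (k : ℝ)⁻¹ := by
          rw [Finset.sum_image (fun a _ b _ h => hginj h)]
      _ ≤ ∑ k ∈ Finset.Icc 1 n, (k : ℝ)⁻¹ := by
          refine sum_inv_le n _ (fun k hk => ?_) ?_
          · obtain ⟨z, -, rfl⟩ := Finset.mem_image.mp hk
            exact enc_pos (φ z)
          · rw [Finset.card_image_of_injective _ hginj, Finset.card_univ]
      _ = ((harmonic n : ℚ) : ℝ) := by rw [harmonic_eq_sum_Icc]; push_cast; rfl
      _ ≤ 1 + Real.log n := harmonic_le_one_add_log n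
      _ ≤ Real.logb 2 ((n:ℝ) + 1) + 1 := by
          have hn0 : (0:ℝ) < (n:ℝ) := by exact_mod_cast hn1
          have h1 : Real.log (n:ℝ) ≤ Real.log ((n:ℝ) + 1) :=
            Real.log_le_log hn0 (by linarith)
          have h0 : (0:ℝ) ≤ Real.log ((n:ℝ) + 1) :=
            Real.log_nonneg (by linarith)
          have h2 : Real.log ((n:ℝ) + 1) ≤ Real.logb 2 ((n:ℝ) + 1) := by
            rw [Real.logb, le_div_iff₀ hlog2]
            nlinarith [Real.log_le_sub_one_of_pos (show (0:ℝ) < 2 by norm_num)]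
          linarith
  have hCpos : 0 < ∑ z ∈ t, ((g z : ℝ))⁻¹ :=
    Finset.sum_pos (fun z _ => by have := hg0 z; positivity) htne
  have hBpos : (0:ℝ) < Real.logb 2 ((n:ℝ) + 1) + 1 := lt_of_lt_of_le hCpos hC
  -- Jensen in base 2
  have hlogb : ∑ z ∈ t, p z * Real.logb 2 (x z)
      ≤ Real.logb 2 (Real.logb 2 ((n:ℝ) + 1) + 1) := by
    have h1 : Real.log (∑ z ∈ t, p z • x z)
        ≤ Real.log (Real.logb 2 ((n:ℝ) + 1) + 1) := by
      rw [hsx]; exact Real.log_le_log hCpos hC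
    have h2 : ∑ z ∈ t, p z * Real.log (x z)
        ≤ Real.log (Real.logb 2 ((n:ℝ) + 1) + 1) := by
      simpa using hjensen.trans h1
    simp only [Real.logb]
    rw [show ∑ z ∈ t, p z * (Real.log (x z) / Real.log 2)
        = (∑ z ∈ t, p z * Real.log (x z)) / Real.log 2 by
      rw [Finset.sum_div]; exact Finset.sum_congr rfl fun z _ => (mul_div_assoc _ _ _).symm]
    exact div_le_div_of_nonneg_right h2 hlog2.le
  -- per-element identity
  have hid : ∀ z ∈ t, Real.logb 2 ((g z : ℝ)) =
      Real.logb 2 (1 / p z) - Real.logb 2 (x z) := by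
    intro z hz
    have hpz := hpt z hz
    rw [one_div, hx]
    simp only []
    rw [Real.logb_inv, Real.logb_inv, Real.logb_mul (ne_of_gt (hg0 z)) (ne_of_gt hpz)]
    ring
  -- restrict sums to the support
  have e1 : ∑ z, p z * ((φ z).length : ℝ) = ∑ z ∈ t, p z * ((φ z).length : ℝ) := by
    refine (Finset.sum_subset (Finset.subset_univ t) fun z _ hz => ?_).symm
    have : p z = 0 := by
      by_contra hpz
      exact hz (Finset.mem_filter.mpr ⟨Finset.mem_univ z, hpz⟩)
    simp [this]
  have e2 : ∑ z, p z * Real.logb 2 (1 / p z)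
      = ∑ z ∈ t, p z * Real.logb 2 (1 / p z) := by
    refine (Finset.sum_subset (Finset.subset_univ t) fun z _ hz => ?_).symm
    have : p z = 0 := by
      by_contra hpz
      exact hz (Finset.mem_filter.mpr ⟨Finset.mem_univ z, hpz⟩)
    simp [this]
  have key : ∑ z ∈ t, p z * Real.logb 2 ((g z : ℝ))
      = ∑ z ∈ t, p z * Real.logb 2 (1 / p z) - ∑ z ∈ t, p z * Real.logb 2 (x z) := by
    rw [← Finset.sum_sub_distrib]
    exact Finset.sum_congr rfl fun z hz => by rw [hid z hz]; ring
  have final : ∑ z ∈ t, p z * Real.logb 2 ((g z : ℝ)) - 1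
      ≤ ∑ z ∈ t, p z * ((φ z).length : ℝ) := by
    have hsle : ∑ z ∈ t, p z * (Real.logb 2 ((g z : ℝ)) - 1)
        ≤ ∑ z ∈ t, p z * ((φ z).length : ℝ) :=
      Finset.sum_le_sum fun z hz => mul_le_mul_of_nonneg_left (hlen z) (hp z)
    have expand : ∑ z ∈ t, p z * (Real.logb 2 ((g z : ℝ)) - 1)
        = ∑ z ∈ t, p z * Real.logb 2 ((g z : ℝ)) - 1 := by
      simp_rw [mul_sub, mul_one, Finset.sum_sub_distrib, hsumt]
    linarith
  rw [ge_iff_le, e1, e2]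
  linarith [hlogb, key, final]
end

section
/- The total length of all distinct strings over an alphabet of size A of length at most L is Σ_{j=1}^{L} j·A^j, and consequently any collection of c pairwise distinct nonempty strings over Fin A whose total length is n satisfies n ≥ c·(log_A(c)/2 − 1) for c ≥ A², i.e., c·log₂ c ≤ 2n·log₂ A + c·(2·log₂ A). -/
private lemma geo_lt (A : ℕ) (hA : 2 ≤ A) (k : ℕ) :
    ∑ j ∈ Finset.range k, A ^ j < A ^ k := by
  induction k with
  | zero => simp
  | succ k ih =>
    rw [Finset.sum_range_succ, pow_succ]
    have : A ^ k * 2 ≤ A ^ k * A := Nat.mul_le_mul_left _ hA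
    omega

private lemma sum_filter_le (p : ℕ → Bool) (l : List ℕ) :
    (l.filter p).sum ≤ l.sum := by
  induction l with
  | nil => simp
  | cons a t ih =>
    by_cases h : p a <;> simp [List.filter_cons, h] <;> omega

/-- Key counting bound: `c` pairwise distinct strings over `Fin A`, fewer than
`A^k` of them have length `< k`, so total length is at least `k * (c - A^k)`. -/
private lemma key_bound (A : ℕ) (hA : 2 ≤ A) (ps : List (List (Fin A)))
    (hnd : ps.Nodup) (k : ℕ) :
    k * (ps.length - A ^ k) ≤ ps.flatten.length := by
  rcases Nat.eq_zero_or_pos k with rfl | hk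
  · simp
  classical
  set long := ps.filter (fun l => decide (k ≤ l.length)) with hlong
  set short := ps.filter (fun l => !decide (k ≤ l.length)) with hshort
  have hsplit : ps.length = long.length + short.length :=
    List.length_eq_length_filter_add _
  -- count short strings
  have hshort_card : short.length < A ^ k := by
    set enc : List (Fin A) → (Σ j : Fin k, Fin j → Fin A) := fun l =>
      if h : l.length < k then ⟨⟨l.length, h⟩, fun i => l.get ⟨i.1, i.2⟩⟩
      else ⟨⟨0, hk⟩, Fin.elim0⟩ with henc
    have hdec : ∀ l : List (Fin A), l.length < k →
        List.ofFn (enc l).2 = l := by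
      intro l hl
      have : enc l = ⟨⟨l.length, hl⟩, fun i => l.get ⟨i.1, i.2⟩⟩ := dif_pos hl
      rw [this]
      exact List.ofFn_get l
    have hinj : ∀ x ∈ short, ∀ y ∈ short, enc x = enc y → x = y := by
      intro x hx y hy hxy
      have hxk : x.length < k := by
        have := List.of_mem_filter hx; simp at this; omega
      have hyk : y.length < k := by
        have := List.of_mem_filter hy; simp at this; omega
      calc x = List.ofFn (enc x).2 := (hdec x hxk).symm
        _ = List.ofFn (enc y).2 := by rw [hxy]
        _ = y := hdec y hyk
    have hndshort : short.Nodup := hnd.filter _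
    have hmapnd : (short.map enc).Nodup := hndshort.map_on hinj
    have hcard := hmapnd.length_le_card
    rw [List.length_map] at hcard
    have hcard2 : Fintype.card (Σ j : Fin k, Fin j → Fin A)
        = ∑ j ∈ Finset.range k, A ^ j := by
      rw [Fintype.card_sigma]
      rw [← Fin.sum_univ_eq_sum_range (fun j => A ^ j) k]
      congr 1; ext j
      simp [Fintype.card_fun]
    exact lt_of_le_of_lt (hcard2 ▸ hcard) (geo_lt A hA k)
  -- lower bound total length by long strings
  have hlen : ps.flatten.length = (ps.map List.length).sum := by
    simp [List.length_flatten]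
  have hsub : (long.map List.length).sum ≤ (ps.map List.length).sum := by
    have : long.map List.length
        = (ps.map List.length).filter (fun m => decide (k ≤ m)) := by
      rw [hlong, List.filter_map]
      rfl
    rw [this]
    exact sum_filter_le _ _
  have hlb : k * long.length ≤ (long.map List.length).sum := by
    have := List.card_nsmul_le_sum (long.map List.length) k ?_
    · simpa [smul_eq_mul, mul_comm] using this
    · intro x hx
      obtain ⟨l, hl, rfl⟩ := List.mem_map.mp hx
      have := List.of_mem_filter hl
      simpa using this
  have : ps.length - A ^ k ≤ long.length := by omega
  calc k * (ps.length - A ^ k) ≤ k * long.length := Nat.mul_le_mul_left _ this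
    _ ≤ (long.map List.length).sum := hlb
    _ ≤ (ps.map List.length).sum := hsub
    _ = ps.flatten.length := hlen.symm

private lemma real_part (A : ℕ) (hA : 2 ≤ A) (c n : ℕ)
    (key : ∀ k : ℕ, k * (c - A ^ k) ≤ n) :
    (c : ℝ) * Real.logb 2 c ≤ 2 * n * Real.logb 2 A + c * (2 * Real.logb 2 A) := by
  have hA1 : (1 : ℝ) < A := by exact_mod_cast hA.trans_lt' one_lt_two
  have hlogA : 0 < Real.logb 2 A := Real.logb_pos one_lt_two hA1
  have hc0 : (0 : ℝ) ≤ c := Nat.cast_nonneg c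
  have hn0 : (0 : ℝ) ≤ n := Nat.cast_nonneg n
  by_cases hsmall : c ≤ A ^ 2
  · have hlc : Real.logb 2 c ≤ 2 * Real.logb 2 A := by
      rcases Nat.eq_zero_or_pos c with rfl | hcpos
      · simpa using le_of_lt (by positivity : (0:ℝ) < 2 * Real.logb 2 A)
      · calc Real.logb 2 c ≤ Real.logb 2 ((A : ℝ) ^ 2) := by
              apply Real.logb_le_logb_of_le one_lt_two (by exact_mod_cast hcpos)
              exact_mod_cast hsmall
          _ = 2 * Real.logb 2 A := by rw [Real.logb_pow]; norm_num
    nlinarith [mul_le_mul_of_nonneg_left hlc hc0, mul_nonneg (mul_nonneg hn0 hlogA.le) (by norm_num : (0:ℝ) ≤ 2)]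
  · push_neg at hsmall
    have hc2 : 2 ≤ c := by nlinarith [Nat.one_le_two_pow (n := 1)]
    set k := Nat.log A (c / 2) with hk
    have hm : c / 2 ≠ 0 := by omega
    have h1 : A ^ k ≤ c / 2 := Nat.pow_log_le_self A hm
    have h2 : c / 2 < A ^ (k + 1) := Nat.lt_pow_succ_log_self (by omega) _
    have hck : c < A ^ (k + 2) := by
      have hmod := Nat.div_add_mod c 2
      have h3 : c < 2 * A ^ (k + 1) := by omega
      have h4 : 2 * A ^ (k + 1) ≤ A ^ (k + 2) := by
        calc 2 * A ^ (k + 1) ≤ A * A ^ (k + 1) := Nat.mul_le_mul_right _ hA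
          _ = A ^ (k + 2) := by ring
      omega
    have hcn : c * k ≤ 2 * n := by
      have hkey := key k
      have h5 : c ≤ 2 * (c - A ^ k) := by
        have hmod := Nat.div_add_mod c 2
        have : A ^ k ≤ c / 2 := h1
        omega
      calc c * k ≤ 2 * (c - A ^ k) * k := Nat.mul_le_mul_right _ h5
        _ = 2 * (k * (c - A ^ k)) := by ring
        _ ≤ 2 * n := by omega
    have hcnR : (c : ℝ) * k ≤ 2 * n := by exact_mod_cast hcn
    have hlc : Real.logb 2 c ≤ (k + 2) * Real.logb 2 A := by
      calc Real.logb 2 c ≤ Real.logb 2 ((A : ℝ) ^ (k + 2)) := by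
            apply Real.logb_le_logb_of_le one_lt_two
              (by exact_mod_cast (by omega : 0 < c))
            exact_mod_cast hck.le
        _ = (k + 2) * Real.logb 2 A := by
            rw [Real.logb_pow]; push_cast; ring
    have := mul_le_mul_of_nonneg_left hlc hc0
    nlinarith [mul_le_mul_of_nonneg_right hcnR hlogA.le]

/-- Counting lemma underlying the Lempel–Ziv complexity bound: the total length of all
distinct strings over `Fin A` of length at most `L` is `∑_{j=1}^{L} j·A^j`, and any
collection of `c` pairwise distinct nonempty strings of total length `n` satisfies
`c·log₂ c ≤ 2n·log₂ A + c·(2·log₂ A)`. -/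
theorem stmt3 (A : ℕ) (hA : 2 ≤ A) (L : ℕ)
    (ps : List (List (Fin A))) (hne : ∀ l ∈ ps, l ≠ []) (hdist : ps.Pairwise (· ≠ ·)) :
    (∑ j ∈ Finset.Icc 1 L, (Fintype.card (Fin j → Fin A)) * j
        = ∑ j ∈ Finset.Icc 1 L, j * A ^ j) ∧
    (ps.length : ℝ) * Real.logb 2 (ps.length) ≤
      2 * ((ps.flatten).length : ℝ) * Real.logb 2 A + (ps.length : ℝ) * (2 * Real.logb 2 A) := by
  constructor
  · apply Finset.sum_congr rfl
    intro j _
    simp [Fintype.card_fun, mul_comm]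
  · exact real_part A hA ps.length ps.flatten.length
      (fun k => key_bound A hA ps hdist k)
end

section
/- Kraft-type converse for finite-state IL encoders on a single state pair: given s states and n input symbols, if an IL finite-state encoder produces, for phrases sharing the same start state s_i and end state s_o, pairwise distinct binary codewords with lengths L_j, then for the empirical distribution p(·|s_i,s_o) of those phrases, Σ_j p(Z_j|s_i,s_o)·L(Z_j|s_i) ≥ Σ_j p(Z_j|s_i,s_o)·log₂(1/p(Z_j|s_i,s_o)) − O(log c), where c is the total number of phrases. -/
open Finset Nat

lemma aux1 (a b : ℕ) : (a + b)! ≤ a ! * (a + b) ^ b := by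
  induction b with
  | zero => simp
  | succ b ih =>
    have : (a + (b+1))! = (a + b + 1) * (a + b)! := by
      rw [← Nat.add_assoc, Nat.factorial_succ]
    rw [this]
    calc (a + b + 1) * (a + b)! ≤ (a + b + 1) * (a ! * (a + b) ^ b) :=
          Nat.mul_le_mul_left _ ih
      _ ≤ a ! * (a + (b+1)) ^ (b+1) := by
          rw [pow_succ]
          ring_nf
          gcongr <;> omega

lemma aux2 (a b : ℕ) : a ! * a ^ b ≤ (a + b)! := by
  induction b with
  | zero => simp
  | succ b ih =>
    have : (a + (b+1))! = (a + b + 1) * (a + b)! := by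
      rw [← Nat.add_assoc, Nat.factorial_succ]
    rw [this, pow_succ, ← mul_assoc]
    calc a ! * a ^ b * a ≤ (a+b)! * (a+b+1) := by
          exact Nat.mul_le_mul ih (by omega)
      _ = (a+b+1) * (a+b)! := by ring

lemma lemC (c d : ℕ) : c ! * c ^ d ≤ d ! * c ^ c := by
  rcases le_total d c with h | h
  · obtain ⟨b, rfl⟩ := Nat.exists_eq_add_of_le h
    calc (d + b)! * (d+b) ^ d ≤ d ! * (d+b) ^ b * (d+b) ^ d :=
          Nat.mul_le_mul_right _ (aux1 d b)
      _ = d ! * (d+b) ^ (d+b) := by rw [mul_assoc, ← pow_add, Nat.add_comm b d]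
  · obtain ⟨b, rfl⟩ := Nat.exists_eq_add_of_le h
    calc c ! * c ^ (c + b) = c ! * c ^ b * c ^ c := by rw [mul_assoc, ← pow_add, Nat.add_comm b c]
      _ ≤ (c + b)! * c ^ c := Nat.mul_le_mul_right _ (aux2 c b)

lemma lemB {S : Type*} [Fintype S] (m : ℕ) (count : S → ℕ) (hcount : ∑ z, count z = m)
    (d : S → ℕ) (hd : ∑ z, d z = m) :
    Nat.multinomial univ d * ∏ z, count z ^ d z ≤
      Nat.multinomial univ count * ∏ z, count z ^ count z := by
  have key : (∏ z, (count z)!) * ∏ z, count z ^ d z ≤ (∏ z, (d z)!) * ∏ z, count z ^ count z := by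
    rw [← prod_mul_distrib, ← prod_mul_distrib]
    exact prod_le_prod' fun z _ => lemC (count z) (d z)
  have hds : (∏ z, (d z)!) * Nat.multinomial univ d = m ! := by
    rw [Nat.multinomial_spec, hd]
  have hcs : (∏ z, (count z)!) * Nat.multinomial univ count = m ! := by
    rw [Nat.multinomial_spec, hcount]
  have hpos : 0 < (∏ z, (d z)!) * ∏ z, (count z)! :=
    Nat.mul_pos (prod_pos fun z _ => Nat.factorial_pos _) (prod_pos fun z _ => Nat.factorial_pos _)
  refine Nat.le_of_mul_le_mul_left ?_ hpos
  calc (∏ z, (d z)!) * (∏ z, (count z)!) * (Nat.multinomial univ d * ∏ z, count z ^ d z)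
      = (∏ z, (count z)!) * (((∏ z, (d z)!) * Nat.multinomial univ d) * ∏ z, count z ^ d z) := by
        ring
    _ = (∏ z, (count z)!) * (m ! * ∏ z, count z ^ d z) := by rw [hds]
    _ = (m !) * ((∏ z, (count z)!) * ∏ z, count z ^ d z) := by ring
    _ ≤ (m !) * ((∏ z, (d z)!) * ∏ z, count z ^ count z) := Nat.mul_le_mul_left _ key
    _ = ((∏ z, (count z)!) * Nat.multinomial univ count) * ((∏ z, (d z)!) * ∏ z, count z ^ count z) := by rw [hcs]
    _ = (∏ z, (d z)!) * (∏ z, (count z)!) * (Nat.multinomial univ count * ∏ z, count z ^ count z) := by ring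

lemma lemA {S : Type*} [Fintype S] [DecidableEq S] (m : ℕ) (count : S → ℕ)
    (hcount : ∑ z, count z = m) :
    m ^ m ≤ (m + 1) ^ (Fintype.card S) *
      (Nat.multinomial univ count * ∏ z, count z ^ count z) := by
  have expand : (m : ℕ) ^ m = ∑ d ∈ piAntidiag (univ : Finset S) m,
      Nat.multinomial univ d * ∏ z, count z ^ d z := by
    rw [← hcount, sum_pow_eq_sum_piAntidiag]
    simp [Nat.cast_id]
  rw [expand]
  have hcard : (piAntidiag (univ : Finset S) m).card ≤ (m + 1) ^ Fintype.card S := by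
    have : (piAntidiag (univ : Finset S) m).card ≤ (univ : Finset (S → Fin (m+1))).card := by
      have hle : ∀ d ∈ piAntidiag (univ : Finset S) m, ∀ z, d z ≤ m := by
        intro d hd z
        rw [mem_piAntidiag] at hd
        exact le_trans (single_le_sum (fun _ _ => Nat.zero_le _) (mem_univ z)) (le_of_eq hd.1)
      apply Finset.card_le_card_of_injOn (fun d z => (⟨min (d z) m, Nat.lt_succ_of_le (Nat.min_le_right _ _)⟩ : Fin (m+1)))
      · intro a _; exact mem_univ _
      · intro a ha b hb hab
        funext z
        have := congrFun hab z
        have ha' := hle a ha z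
        have hb' := hle b hb z
        simp [Fin.mk.injEq, Nat.min_eq_left ha', Nat.min_eq_left hb'] at this
        exact this
    simpa [Fintype.card_fun] using this
  calc ∑ d ∈ piAntidiag (univ : Finset S) m, Nat.multinomial univ d * ∏ z, count z ^ d z
      ≤ ∑ d ∈ piAntidiag (univ : Finset S) m,
          Nat.multinomial univ count * ∏ z, count z ^ count z := by
        refine sum_le_sum fun d hd => ?_
        rw [mem_piAntidiag] at hd
        exact lemB m count hcount d hd.1
    _ = (piAntidiag (univ : Finset S) m).card * (Nat.multinomial univ count * ∏ z, count z ^ count z) := by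
        rw [sum_const, smul_eq_mul]
    _ ≤ _ := Nat.mul_le_mul_right _ hcard

lemma lemD {S : Type*} [Fintype S] [DecidableEq S] (m : ℕ) (count : S → ℕ)
    (f0 : Fin m → S) (h0 : ∀ z, (univ.filter fun i => f0 i = z).card = count z) :
    Nat.multinomial univ count ≤
      (univ.filter (fun f : Fin m → S =>
        ∀ z, (univ.filter fun i => f i = z).card = count z)).card := by
  classical
  set T' := univ.filter (fun f : Fin m → S =>
        ∀ z, (univ.filter fun i => f i = z).card = count z) with hT'
  -- step 1: m ! ≤ T'.card * ∏ z, (count z)!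
  have key : m ! ≤ T'.card * ∏ z, (count z)! := by
    have hmaps : ∀ σ : Equiv.Perm (Fin m), σ ∈ (univ : Finset (Equiv.Perm (Fin m))) →
        (f0 ∘ σ) ∈ T' := by
      intro σ _
      simp only [hT', mem_filter, mem_univ, true_and]
      intro z
      rw [← h0 z]
      apply Finset.card_bij (fun i _ => σ i)
      · intro a ha
        simp only [mem_filter, mem_univ, true_and] at ha ⊢
        exact ha
      · intro a _ b _ hab; exact σ.injective hab
      · intro j hj
        refine ⟨σ.symm j, ?_, by simp⟩
        simp only [mem_filter, mem_univ, true_and, Function.comp] at hj ⊢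
        simpa using hj
    have hsum := Finset.card_eq_sum_card_fiberwise hmaps
    have hfib : ∀ b ∈ T',
        ((univ : Finset (Equiv.Perm (Fin m))).filter fun σ : Equiv.Perm (Fin m) => f0 ∘ ⇑σ = b).card
          ≤ ∏ z, (count z)! := by
      intro b hb
      simp only [hT', mem_filter, mem_univ, true_and] at hb
      have hcard1 : ∀ z, Fintype.card {i : Fin m // b i = z} = count z := by
        intro z; rw [Fintype.card_subtype]; exact hb z
      have hcard2 : ∀ z, Fintype.card {j : Fin m // f0 j = z} = count z := by
        intro z; rw [Fintype.card_subtype]; exact h0 z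
      have hfc : ((univ : Finset (Equiv.Perm (Fin m))).filter fun σ : Equiv.Perm (Fin m) => f0 ∘ ⇑σ = b).card
          = Fintype.card {σ : Equiv.Perm (Fin m) // f0 ∘ ⇑σ = b} := by
        rw [Fintype.card_subtype]
      rw [hfc]
      have hinj2 : Function.Injective
          (fun (σ : {σ : Equiv.Perm (Fin m) // f0 ∘ ⇑σ = b}) =>
            (fun z => Equiv.ofBijective
              (fun i : {i : Fin m // b i = z} =>
                (⟨σ.1 i.1, by
                  have h1 := congrFun σ.2 i.1
                  simp only [Function.comp] at h1
                  rw [h1, i.2]⟩ : {j : Fin m // f0 j = z}))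
              (by
                refine (Fintype.bijective_iff_injective_and_card _).mpr ⟨?_, ?_⟩
                · intro x y hxy
                  exact Subtype.ext (σ.1.injective (congrArg Subtype.val hxy))
                · rw [hcard1, hcard2]))) := by
        intro σ τ h
        apply Subtype.ext
        apply Equiv.ext
        intro i
        have h1 := congrFun h (b i)
        have h2 := DFunLike.congr_fun h1 (⟨i, rfl⟩ : {i' : Fin m // b i' = b i})
        exact congrArg Subtype.val h2
      calc Fintype.card {σ : Equiv.Perm (Fin m) // f0 ∘ ⇑σ = b}
          ≤ Fintype.card (∀ z, {i : Fin m // b i = z} ≃ {j : Fin m // f0 j = z}) :=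
            Fintype.card_le_of_injective _ hinj2
        _ = ∏ z, Fintype.card ({i : Fin m // b i = z} ≃ {j : Fin m // f0 j = z}) :=
            Fintype.card_pi
        _ = ∏ z, (count z)! := by
            refine Finset.prod_congr rfl fun z _ => ?_
            rw [Fintype.card_equiv (Fintype.equivOfCardEq (by rw [hcard1, hcard2])), hcard1]
    calc m ! = Fintype.card (Equiv.Perm (Fin m)) := by
          rw [Fintype.card_perm, Fintype.card_fin]
      _ = (univ : Finset (Equiv.Perm (Fin m))).card := (Finset.card_univ).symm
      _ = ∑ b ∈ T', ((univ : Finset (Equiv.Perm (Fin m))).filter fun σ : Equiv.Perm (Fin m) => f0 ∘ ⇑σ = b).card :=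
          hsum
      _ ≤ ∑ _b ∈ T', ∏ z, (count z)! := Finset.sum_le_sum hfib
      _ = T'.card * ∏ z, (count z)! := by rw [sum_const, smul_eq_mul]
  -- step 2: cancel
  have hpos : 0 < ∏ z, (count z)! := prod_pos fun z _ => Nat.factorial_pos _
  have hspec : (∏ z, (count z)!) * Nat.multinomial univ count = (∑ z, count z)! :=
    Nat.multinomial_spec _ _
  have hsum0 : ∑ z, count z = m := by
    have h : (univ : Finset (Fin m)).card
        = ∑ b : S, ((univ : Finset (Fin m)).filter fun i => f0 i = b).card :=
      Finset.card_eq_sum_card_fiberwise (fun x _ => mem_univ _)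
    calc ∑ z, count z = ∑ z, (univ.filter fun i => f0 i = z).card :=
          Finset.sum_congr rfl fun z _ => (h0 z).symm
      _ = (univ : Finset (Fin m)).card := h.symm
      _ = m := by simp [Finset.card_univ]
  refine Nat.le_of_mul_le_mul_left ?_ hpos
  calc (∏ z, (count z)!) * Nat.multinomial univ count = (∑ z, count z)! := hspec
    _ = m ! := by rw [hsum0]
    _ ≤ T'.card * ∏ z, (count z)! := key
    _ = (∏ z, (count z)!) * T'.card := by ring

/-- Kraft-type converse for IL encoders on a single state pair: if an encoder assigns
to each arrangement of `m` items (with prescribed counts) a binary string whose length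
is the sum of per-item codeword lengths, injectively on arrangements with those counts,
then the total code length is at least `m·H(p) − k·log₂(m+1)`. -/
theorem stmt8 {S : Type*} [Fintype S] [DecidableEq S]
    (m : ℕ) (hm : 0 < m) (count : S → ℕ) (hcount : ∑ z, count z = m)
    (L : S → ℕ) (enc : (Fin m → S) → List Bool)
    (hlen : ∀ f : Fin m → S, (enc f).length = ∑ i, L (f i))
    (hinj : Set.InjOn enc
      {f | ∀ z, (Finset.univ.filter (fun i => f i = z)).card = count z})
    (hex : ∃ f : Fin m → S,
      ∀ z, (Finset.univ.filter (fun i => f i = z)).card = count z) :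
    (m : ℝ) * ∑ z, ((count z : ℝ) / m) * Real.logb 2 ((m : ℝ) / (count z))
        - (Fintype.card S : ℝ) * Real.logb 2 ((m : ℝ) + 1)
      ≤ ∑ z, (count z : ℝ) * (L z : ℝ) := by
  classical
  obtain ⟨f0, h0⟩ := hex
  set N := ∑ z, count z * L z with hN
  set T' := univ.filter (fun f : Fin m → S =>
        ∀ z, (univ.filter fun i => f i = z).card = count z) with hT'
  set k := Fintype.card S with hk
  -- all elements of T' have code length N
  have hNlen : ∀ f ∈ T', (enc f).length = N := by
    intro f hf
    simp only [hT', mem_filter, mem_univ, true_and] at hf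
    rw [hlen f, hN]
    rw [← Finset.sum_fiberwise_of_maps_to (g := f) (fun i _ => mem_univ (f i)) (fun i => L (f i))]
    refine Finset.sum_congr rfl fun z _ => ?_
    rw [← hf z]
    apply Finset.sum_const_nat
    intro i hi
    simp only [mem_filter] at hi
    rw [hi.2]
  -- T'.card ≤ 2 ^ N
  have hTle : T'.card ≤ 2 ^ N := by
    have h1 : T'.card ≤ ((univ : Finset (List.Vector Bool N)).image
        (fun v => v.toList)).card := by
      apply Finset.card_le_card_of_injOn enc
      · intro f hf
        rw [mem_coe, mem_image]
        exact ⟨⟨enc f, hNlen f hf⟩, mem_univ _, rfl⟩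
      · apply hinj.mono
        intro f hf
        simp only [hT', coe_filter, Set.mem_setOf_eq, mem_univ, true_and] at hf ⊢
        exact hf
    calc T'.card ≤ ((univ : Finset (List.Vector Bool N)).image (fun v => v.toList)).card := h1
      _ ≤ (univ : Finset (List.Vector Bool N)).card := card_image_le
      _ = 2 ^ N := by rw [Finset.card_univ, card_vector, Fintype.card_bool]
  -- key ℕ inequality
  have hnat : m ^ m ≤ (m + 1) ^ k * (2 ^ N * ∏ z, count z ^ count z) := by
    calc m ^ m ≤ (m + 1) ^ k * (Nat.multinomial univ count * ∏ z, count z ^ count z) :=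
          lemA m count hcount
      _ ≤ (m + 1) ^ k * (T'.card * ∏ z, count z ^ count z) := by
          gcongr
          exact lemD m count f0 h0
      _ ≤ (m + 1) ^ k * (2 ^ N * ∏ z, count z ^ count z) := by gcongr
  -- real/log part
  have hm' : (0:ℝ) < m := by exact_mod_cast hm
  have hreal : ((m:ℝ)) ^ m ≤ ((m:ℝ) + 1) ^ k * (2 ^ N * ∏ z, (count z : ℝ) ^ count z) := by
    exact_mod_cast hnat
  have hfacne : ∀ z : S, ((count z : ℝ)) ^ count z ≠ 0 := by
    intro z
    rcases Nat.eq_zero_or_pos (count z) with h | h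
    · simp [h]
    · positivity
  have hprodpos : (0:ℝ) < ∏ z, (count z : ℝ) ^ count z :=
    Finset.prod_pos fun z _ => lt_of_le_of_ne (by positivity) (Ne.symm (hfacne z))
  have hlog : (m:ℝ) * Real.logb 2 m ≤
      (k:ℝ) * Real.logb 2 ((m:ℝ)+1) + ((N:ℝ) + ∑ z, (count z : ℝ) * Real.logb 2 (count z)) := by
    have h1 : Real.logb 2 ((m:ℝ) ^ m) ≤
        Real.logb 2 (((m:ℝ) + 1) ^ k * (2 ^ N * ∏ z, (count z : ℝ) ^ count z)) := by
      apply Real.logb_le_logb_of_le one_lt_two (by positivity) hreal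
    rw [Real.logb_pow] at h1
    rw [Real.logb_mul (by positivity) (by positivity), Real.logb_mul (by positivity)
      (ne_of_gt hprodpos), Real.logb_pow, Real.logb_pow, Real.logb_self_eq_one one_lt_two, mul_one] at h1
    rw [Real.logb_prod _ _ (fun z _ => hfacne z)] at h1
    calc (m:ℝ) * Real.logb 2 m ≤ _ := h1
      _ = (k:ℝ) * Real.logb 2 ((m:ℝ)+1) + ((N:ℝ) + ∑ z, (count z : ℝ) * Real.logb 2 (count z)) := by
        congr 1
        congr 1
        refine Finset.sum_congr rfl fun z _ => ?_
        rw [Real.logb_pow]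
  -- rewrite the entropy sum
  have hsum1 : (m:ℝ) * ∑ z, ((count z : ℝ) / m) * Real.logb 2 ((m : ℝ) / (count z))
      = (m:ℝ) * Real.logb 2 m - ∑ z, (count z : ℝ) * Real.logb 2 (count z) := by
    rw [Finset.mul_sum]
    have : ∀ z : S, (m:ℝ) * (((count z : ℝ) / m) * Real.logb 2 ((m : ℝ) / (count z)))
        = (count z : ℝ) * Real.logb 2 m - (count z : ℝ) * Real.logb 2 (count z) := by
      intro z
      rcases Nat.eq_zero_or_pos (count z) with h | h
      · simp [h]
      · have hc : (0:ℝ) < (count z : ℝ) := by exact_mod_cast h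
        rw [Real.logb_div (ne_of_gt hm') (ne_of_gt hc)]
        field_simp
    rw [Finset.sum_congr rfl fun z _ => this z, Finset.sum_sub_distrib, ← Finset.sum_mul]
    have : ∑ z, (count z : ℝ) = (m:ℝ) := by exact_mod_cast hcount
    rw [this]
  have hNcast : (N:ℝ) = ∑ z, (count z : ℝ) * (L z : ℝ) := by
    rw [hN]
    push_cast
    rfl
  rw [hsum1, ← hNcast]
  linarith
end
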